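/- arXiv:2406.02119 — 2 statements merged into one kernel-verified Lean document; each statement's English description precedes it below -/
import Mathlib

section
/- Let 1 ≤ L ≤ M, let μ_1, ..., μ_L be pairwise distinct positive real numbers and t_1, ..., t_M be pairwise distinct positive real numbers. Then the L × M real matrix J with entries J(i, j) = (1 − exp(−μ_i · t_j)) / μ_i has rank L, i.e., its rows are linearly independent (equivalently, its columns span ℝ^L). -/
set_option autoImplicit false

open Real Finset

/-- A sum of `n` exponentials with pairwise distinct exponents vanishing at `n`
increasing points has all coefficients zero. -/
lemma exp_sum_zeros (n : ℕ) : ∀ (N : ℕ) (l : Fin n → ℝ) (_ : Function.Injective l)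
    (a : Fin n → ℝ) (x : Fin N → ℝ) (_ : StrictMono x) (_ : n ≤ N)
    (_ : ∀ k, ∑ i, a i * Real.exp (l i * x k) = 0), ∀ i, a i = 0 := by
  induction n with
  | zero => intro _ _ _ _ _ _ _ _ i; exact absurd i.2 (by omega)
  | succ n IH =>
    intro N l hl a x hx hnN h
    obtain ⟨N', rfl⟩ : ∃ N', N = N' + 1 := ⟨N - 1, by omega⟩
    -- the auxiliary function F and its derivative G
    set F : ℝ → ℝ := fun u => ∑ i, a i * Real.exp ((l i - l 0) * u) with hF
    set G : ℝ → ℝ := fun u => ∑ i, a i * ((l i - l 0) * Real.exp ((l i - l 0) * u)) with hG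
    have hderiv : ∀ u : ℝ, HasDerivAt F (G u) u := by
      intro u
      apply HasDerivAt.fun_sum
      intro i _
      have h1 : HasDerivAt (fun v : ℝ => (l i - l 0) * v) (l i - l 0) u := by
        simpa using (hasDerivAt_id u).const_mul (l i - l 0)
      have h2 := (Real.hasDerivAt_exp ((l i - l 0) * u)).comp u h1
      have h3 := h2.const_mul (a i)
      exact h3.congr_deriv (by ring)
    have hFzero : ∀ k, F (x k) = 0 := by
      intro k
      have : F (x k) = (∑ i, a i * Real.exp (l i * x k)) * Real.exp (-(l 0) * x k) := by
        rw [Finset.sum_mul]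
        refine Finset.sum_congr rfl fun i _ => ?_
        rw [mul_assoc, ← Real.exp_add]
        ring_nf
      rw [this, h k, zero_mul]
    -- Rolle between consecutive zeros
    have hRolle : ∀ k : Fin N', ∃ y ∈ Set.Ioo (x k.castSucc) (x k.succ), G y = 0 := by
      intro k
      have hlt : x k.castSucc < x k.succ := hx Fin.castSucc_lt_succ
      have hcont : ContinuousOn F (Set.Icc (x k.castSucc) (x k.succ)) :=
        (HasDerivAt.continuousOn (fun u _ => hderiv u))
      obtain ⟨y, hy, hy0⟩ := exists_deriv_eq_zero hlt hcont
        (by rw [hFzero, hFzero])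
      exact ⟨y, hy, by rwa [(hderiv y).deriv] at hy0⟩
    choose y hy hy0 using hRolle
    have hymono : StrictMono y := by
      intro k k' hkk'
      have hle : (k.succ : Fin (N' + 1)) ≤ k'.castSucc := by
        simp only [Fin.le_def, Fin.val_succ, Fin.coe_castSucc]
        exact hkk'
      calc y k < x k.succ := (hy k).2
        _ ≤ x k'.castSucc := hx.monotone hle
        _ < y k' := (hy k').1
    -- apply IH to the derivative
    have hIH := IH N' (fun i => l i.succ - l 0)
      (fun i j hij =>
        Fin.succ_injective n (hl (by simpa [sub_left_inj] using hij)))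
      (fun i => a i.succ * (l i.succ - l 0)) y hymono (by omega)
      (fun k => by
        have := hy0 k
        simp only [hG, Fin.sum_univ_succ, sub_self, zero_mul, mul_zero, zero_add] at this
        simpa [mul_assoc] using this)
    have hsucc : ∀ i : Fin n, a i.succ = 0 := by
      intro i
      have := hIH i
      have hne : l i.succ - l 0 ≠ 0 := by
        intro hc
        exact (Fin.succ_ne_zero i) (hl (by linarith [sub_eq_zero.mp hc]))
      exact (mul_eq_zero.mp this).resolve_right hne
    have h0 : a 0 = 0 := by
      have := h 0
      rw [Fin.sum_univ_succ] at this
      simp only [hsucc, zero_mul, Finset.sum_const_zero, add_zero] at this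
      exact (mul_eq_zero.mp this).resolve_right (Real.exp_ne_zero _)
    intro i
    rcases Fin.eq_zero_or_eq_succ i with rfl | ⟨j, rfl⟩
    · exact h0
    · exact hsucc j


set_option maxHeartbeats 1000000 in
/-- The `L × M` matrix `J(i,j) = (1 − exp(−μ_i · t_j)) / μ_i` with `1 ≤ L ≤ M`, pairwise
distinct positive `μ_i` and pairwise distinct positive `t_j`, has full row rank `L`. -/
theorem one_sub_exp_div_matrix_rank_eq (L M : ℕ) (hL : 1 ≤ L) (hLM : L ≤ M)
    (μ : Fin L → ℝ) (t : Fin M → ℝ) (hμ : Function.Injective μ) (ht : Function.Injective t)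
    (hμpos : ∀ i, 0 < μ i) (htpos : ∀ j, 0 < t j) :
    (Matrix.of fun (i : Fin L) (j : Fin M) =>
      (1 - Real.exp (-μ i * t j)) / μ i).rank = L := by
  have hind : LinearIndependent ℝ (Matrix.of fun (i : Fin L) (j : Fin M) =>
      (1 - Real.exp (-μ i * t j)) / μ i) := by
    refine Fintype.linearIndependent_iff.mpr ?_
    intro g hg
    -- hypothesis: the combination vanishes at each t j
    have hval : ∀ j : Fin M, ∑ i, g i * ((1 - Real.exp (-μ i * t j)) / μ i) = 0 := by
      intro j
      have := congrFun hg j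
      simpa [Finset.sum_apply] using this
    -- set up the exponential sum
    set l : Fin (L + 1) → ℝ := Fin.cons 0 (fun i => -μ i) with hldef
    set a : Fin (L + 1) → ℝ := Fin.cons (∑ i, g i / μ i) (fun i => -(g i / μ i)) with hadef
    have hsum : ∀ u : ℝ, ∑ i, a i * Real.exp (l i * u)
        = ∑ i, g i * ((1 - Real.exp (-μ i * u)) / μ i) := by
      intro u
      rw [Fin.sum_univ_succ]
      simp only [hldef, hadef, Fin.cons_zero, Fin.cons_succ, zero_mul, Real.exp_zero, mul_one]
      rw [← Finset.sum_add_distrib]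
      refine Finset.sum_congr rfl fun i _ => ?_
      have := (hμpos i).ne'
      field_simp
      ring
    have hlinj : Function.Injective l := by
      intro i j hij
      induction i using Fin.cases with
      | zero =>
        induction j using Fin.cases with
        | zero => rfl
        | succ j =>
          exfalso
          simp only [hldef, Fin.cons_zero, Fin.cons_succ] at hij
          nlinarith [hμpos j]
      | succ i =>
        induction j using Fin.cases with
        | zero =>
          exfalso
          simp only [hldef, Fin.cons_zero, Fin.cons_succ] at hij
          nlinarith [hμpos i]
        | succ j =>
          simp only [hldef, Fin.cons_succ, neg_inj] at hij
          exact congrArg Fin.succ (hμ hij)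
    -- the zero set: {0} ∪ {t j}
    set s : Finset ℝ := insert 0 (Finset.image t Finset.univ) with hsdef
    have h0mem : (0 : ℝ) ∉ Finset.image t Finset.univ := by
      simp only [Finset.mem_image, Finset.mem_univ, true_and, not_exists]
      intro j h
      exact absurd h (htpos j).ne'
    have hscard : s.card = M + 1 := by
      rw [hsdef, Finset.card_insert_of_notMem h0mem,
        Finset.card_image_of_injective _ ht, Finset.card_univ, Fintype.card_fin]
    set x : Fin (M + 1) → ℝ := fun k => s.orderEmbOfFin hscard k with hxdef
    have hxmono : StrictMono x := (s.orderEmbOfFin hscard).strictMono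
    have hzero : ∀ k, ∑ i, a i * Real.exp (l i * x k) = 0 := by
      intro k
      rw [hsum]
      have hmem : x k ∈ s := s.orderEmbOfFin_mem hscard k
      rw [hsdef, Finset.mem_insert] at hmem
      rcases hmem with h0 | hmem
      · rw [h0]; simp
      · obtain ⟨j, -, hj⟩ := Finset.mem_image.mp hmem
        rw [← hj]
        exact hval j
    have hcoeff := exp_sum_zeros (L + 1) (M + 1) l hlinj a x hxmono (by omega) hzero
    intro i
    have := hcoeff i.succ
    simp only [hadef, Fin.cons_succ, neg_eq_zero] at this
    have hμne := (hμpos i).ne'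
    field_simp at this
    simpa using this
  rw [hind.rank_matrix, Fintype.card_fin]
end

section
/- (Matrix form of Theorem 3.2.) Let N ≥ L ≥ 1, let T > 0 and 0 < μ_1 ≤ μ_2 ≤ ... ≤ μ_L. Let Φ be a real N × L matrix with orthonormal columns (Φᵀ Φ = I_L), let F be an invertible diagonal L × L matrix, let D = diag(d_1, ..., d_L) with d_i = exp(−μ_i T), and let J be an invertible L × L real matrix. Set A = Φ F J and Ã = Φ D F J, with columns y_1, ..., y_L and ỹ_1, ..., ỹ_L respectively (viewed as vectors in Euclidean space ℝ^N). Let V be a linear subspace of ℝ^N and let P denote the orthogonal projection onto V. Then (Σ_{j=1}^{L} ‖y_j − P y_j‖²) · (Σ_{j=1}^{L} ‖ỹ_j‖²) ≤ L · ‖J‖₂² · ‖J⁻¹‖₂² · exp(2 μ_L T) · (Σ_{j=1}^{L} ‖ỹ_j − P ỹ_j‖²) · (Σ_{j=1}^{L} ‖y_j‖²). -/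
set_option autoImplicit false

open Matrix

private lemma euclid_norm_sq {n : ℕ} (x : EuclideanSpace ℝ (Fin n)) :
    ‖x‖ ^ 2 = ∑ i, (x i) ^ 2 := by
  rw [EuclideanSpace.norm_eq, Real.sq_sqrt (by positivity)]
  simp [sq_abs]

private lemma euclid_sum_apply {n : ℕ} {ι : Type*} (s : Finset ι)
    (g : ι → EuclideanSpace ℝ (Fin n)) (i : Fin n) :
    (∑ k ∈ s, g k) i = ∑ k ∈ s, g k i := by
  classical
  induction s using Finset.induction_on with
  | empty => rfl
  | insert _ _ h ih => rw [Finset.sum_insert h, Finset.sum_insert h, PiLp.add_apply, ih]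

set_option maxHeartbeats 1000000 in
/-- Matrix form of Theorem 3.2 (backward problem): with `D = diag(exp(−μ_i T))`,
`A = Φ F J`, `Ã = Φ D F J`, and `P` the orthogonal projection onto a subspace `V ⊆ ℝ^N`:
`(Σ_j ‖y_j − P y_j‖²)(Σ_j ‖ỹ_j‖²) ≤ L ‖J‖₂² ‖J⁻¹‖₂² exp(2 μ_L T)
  (Σ_j ‖ỹ_j − P ỹ_j‖²)(Σ_j ‖y_j‖²)`. -/
theorem pod_projection_transfer_backward (N L : ℕ) (hL : 1 ≤ L) (hLN : L ≤ N)
    (T : ℝ) (hT : 0 < T) (μ : Fin L → ℝ) (hμmono : Monotone μ)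
    (hμpos : 0 < μ ⟨0, by omega⟩)
    (Φ : Matrix (Fin N) (Fin L) ℝ) (hΦ : Φᵀ * Φ = 1)
    (f : Fin L → ℝ) (hf : ∀ i, f i ≠ 0)
    (J : Matrix (Fin L) (Fin L) ℝ) (hJ : IsUnit J)
    (A Atil : Matrix (Fin N) (Fin L) ℝ)
    (hA : A = Φ * Matrix.diagonal f * J)
    (hAtil : Atil = Φ * Matrix.diagonal (fun i => Real.exp (-μ i * T)) *
      Matrix.diagonal f * J)
    (y ytil : Fin L → EuclideanSpace ℝ (Fin N))
    (hy : ∀ j i, y j i = A i j) (hytil : ∀ j i, ytil j i = Atil i j)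
    (V : Submodule ℝ (EuclideanSpace ℝ (Fin N))) :
    (∑ j, ‖y j - (Submodule.orthogonalProjection V (y j) : EuclideanSpace ℝ (Fin N))‖ ^ 2) *
        (∑ j, ‖ytil j‖ ^ 2) ≤
      (L : ℝ) * ‖Matrix.toEuclideanCLM (𝕜 := ℝ) J‖ ^ 2 *
        ‖Matrix.toEuclideanCLM (𝕜 := ℝ) J⁻¹‖ ^ 2 *
        Real.exp (2 * μ ⟨L - 1, by omega⟩ * T) *
        (∑ j, ‖ytil j - (Submodule.orthogonalProjection V (ytil j) : EuclideanSpace ℝ (Fin N))‖ ^ 2) *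
        (∑ j, ‖y j‖ ^ 2) := by
  set μmax : ℝ := μ ⟨L - 1, by omega⟩ with hμmax
  have hμle : ∀ k : Fin L, μ k ≤ μmax := by
    intro k
    refine hμmono ?_
    rw [Fin.le_def]
    have := k.isLt
    simp
    omega
  have hμk : ∀ k : Fin L, 0 < μ k := by
    intro k
    refine lt_of_lt_of_le hμpos (hμmono ?_)
    simp [Fin.le_def]
  set D : Matrix (Fin L) (Fin L) ℝ := Matrix.diagonal (fun i => Real.exp (-μ i * T)) with hD
  set Dinv : Matrix (Fin L) (Fin L) ℝ := Matrix.diagonal (fun i => Real.exp (μ i * T)) with hDinv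
  set K : Matrix (Fin L) (Fin L) ℝ := J⁻¹ * Dinv * J with hK
  have hJJ : J * J⁻¹ = 1 := Matrix.mul_nonsing_inv J ((Matrix.isUnit_iff_isUnit_det J).mp hJ)
  -- A = Atil * K
  have hDFD : D * Matrix.diagonal f * Dinv = Matrix.diagonal f := by
    rw [hD, hDinv, Matrix.diagonal_mul_diagonal, Matrix.diagonal_mul_diagonal]
    have hfun : (fun i => Real.exp (-μ i * T) * f i * Real.exp (μ i * T)) = f := by
      funext i
      have h1 : Real.exp (-μ i * T) * Real.exp (μ i * T) = 1 := by
        rw [← Real.exp_add]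
        ring_nf
        exact Real.exp_zero
      rw [mul_comm (Real.exp (-μ i * T)) (f i), mul_assoc, h1, mul_one]
    rw [hfun]
  have hAK : A = Atil * K := by
    rw [hA, hAtil, hK]
    symm
    calc Φ * D * Matrix.diagonal f * J * (J⁻¹ * Dinv * J)
        = Φ * D * Matrix.diagonal f * (J * J⁻¹) * (Dinv * J) := by
          simp only [Matrix.mul_assoc]
      _ = Φ * (D * Matrix.diagonal f * Dinv) * J := by
          rw [hJJ, Matrix.mul_one]; simp only [Matrix.mul_assoc]
      _ = Φ * Matrix.diagonal f * J := by rw [hDFD, Matrix.mul_assoc]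
  -- y j as combination of ytil
  have hyK : ∀ j, y j = ∑ k, K k j • ytil k := by
    intro j
    ext i
    rw [euclid_sum_apply]
    have h2 : ∀ k : Fin L, (K k j • ytil k) i = K k j * ytil k i := fun k => rfl
    rw [Finset.sum_congr rfl fun k _ => h2 k, hy, hAK, Matrix.mul_apply]
    exact Finset.sum_congr rfl fun k _ => by rw [hytil]; ring
  set P := Submodule.orthogonalProjection V with hP
  set s : Fin L → EuclideanSpace ℝ (Fin N) :=
    fun k => ytil k - (P (ytil k) : EuclideanSpace ℝ (Fin N)) with hs
  have hr : ∀ j, y j - (P (y j) : EuclideanSpace ℝ (Fin N)) = ∑ k, K k j • s k := by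
    intro j
    rw [hyK j, map_sum, Submodule.coe_sum, ← Finset.sum_sub_distrib]
    refine Finset.sum_congr rfl fun k _ => ?_
    simp [hs, smul_sub]
  set S3 : ℝ := ∑ k, ‖s k‖ ^ 2 with hS3
  have hS3nonneg : 0 ≤ S3 := Finset.sum_nonneg fun k _ => by positivity
  -- column bound on K
  set cJ : ℝ := ‖Matrix.toEuclideanCLM (𝕜 := ℝ) J‖ with hcJ
  set cJi : ℝ := ‖Matrix.toEuclideanCLM (𝕜 := ℝ) J⁻¹‖ with hcJi
  have hDinvbound : ∀ x : EuclideanSpace ℝ (Fin L),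
      ‖Matrix.toEuclideanCLM (𝕜 := ℝ) Dinv x‖ ≤ Real.exp (μmax * T) * ‖x‖ := by
    intro x
    have happ : ∀ k, (Matrix.toEuclideanCLM (𝕜 := ℝ) Dinv x) k = Real.exp (μ k * T) * x k := by
      intro k
      have h0 : (Matrix.toEuclideanCLM (𝕜 := ℝ) Dinv x) k = (Dinv *ᵥ (fun i => x i)) k := rfl
      rw [h0, hDinv, Matrix.mulVec_diagonal]
    rw [EuclideanSpace.norm_eq, EuclideanSpace.norm_eq,
      ← Real.sqrt_sq (le_of_lt (Real.exp_pos (μmax * T))), ← Real.sqrt_mul (by positivity)]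
    apply Real.sqrt_le_sqrt
    rw [Finset.mul_sum]
    apply Finset.sum_le_sum
    intro k _
    rw [happ k]
    have h1 : Real.exp (μ k * T) ≤ Real.exp (μmax * T) :=
      Real.exp_le_exp.mpr (mul_le_mul_of_nonneg_right (hμle k) hT.le)
    simp only [Real.norm_eq_abs, sq_abs, mul_pow]
    exact mul_le_mul_of_nonneg_right (pow_le_pow_left₀ (Real.exp_pos _).le h1 2) (sq_nonneg _)
  have hKcol : ∀ j : Fin L, ∑ k, (K k j) ^ 2 ≤ cJ ^ 2 * cJi ^ 2 * Real.exp (2 * μmax * T) := by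
    intro j
    set ej : EuclideanSpace ℝ (Fin L) := EuclideanSpace.single j (1 : ℝ) with hej
    have hcol : ∀ k, (Matrix.toEuclideanCLM (𝕜 := ℝ) K ej) k = K k j := by
      intro k
      have h0 : (Matrix.toEuclideanCLM (𝕜 := ℝ) K ej) k = (K *ᵥ (fun i => ej i)) k := rfl
      rw [h0]
      have h1 : (fun i => ej i) = Pi.single j (1 : ℝ) := by
        funext i; simp [hej, EuclideanSpace.single_apply, Pi.single_apply]
      rw [h1, Matrix.mulVec_single]
      simp
    have hnorm : ∑ k, (K k j) ^ 2 = ‖Matrix.toEuclideanCLM (𝕜 := ℝ) K ej‖ ^ 2 := by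
      rw [euclid_norm_sq]
      exact (Finset.sum_congr rfl fun k _ => by rw [hcol k]).symm
    rw [hnorm]
    have hKsplit : Matrix.toEuclideanCLM (𝕜 := ℝ) K ej =
        Matrix.toEuclideanCLM (𝕜 := ℝ) J⁻¹
          (Matrix.toEuclideanCLM (𝕜 := ℝ) Dinv (Matrix.toEuclideanCLM (𝕜 := ℝ) J ej)) := by
      rw [hK, _root_.map_mul, _root_.map_mul]
      rfl
    have hejnorm : ‖ej‖ = 1 := by
      rw [hej, EuclideanSpace.norm_single]; norm_num
    have hb : ‖Matrix.toEuclideanCLM (𝕜 := ℝ) K ej‖ ≤ cJi * (Real.exp (μmax * T) * cJ) := by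
      rw [hKsplit]
      calc ‖Matrix.toEuclideanCLM (𝕜 := ℝ) J⁻¹
            (Matrix.toEuclideanCLM (𝕜 := ℝ) Dinv (Matrix.toEuclideanCLM (𝕜 := ℝ) J ej))‖
          ≤ cJi * ‖Matrix.toEuclideanCLM (𝕜 := ℝ) Dinv (Matrix.toEuclideanCLM (𝕜 := ℝ) J ej)‖ :=
            ContinuousLinearMap.le_opNorm _ _
        _ ≤ cJi * (Real.exp (μmax * T) * ‖Matrix.toEuclideanCLM (𝕜 := ℝ) J ej‖) :=
            mul_le_mul_of_nonneg_left (hDinvbound _) (norm_nonneg _)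
        _ ≤ cJi * (Real.exp (μmax * T) * (cJ * ‖ej‖)) := by
            apply mul_le_mul_of_nonneg_left _ (norm_nonneg _)
            exact mul_le_mul_of_nonneg_left (ContinuousLinearMap.le_opNorm _ _)
              (Real.exp_pos _).le
        _ = cJi * (Real.exp (μmax * T) * cJ) := by rw [hejnorm]; ring
    calc ‖Matrix.toEuclideanCLM (𝕜 := ℝ) K ej‖ ^ 2
        ≤ (cJi * (Real.exp (μmax * T) * cJ)) ^ 2 :=
          pow_le_pow_left₀ (norm_nonneg _) hb 2
      _ = cJ ^ 2 * cJi ^ 2 * Real.exp (2 * μmax * T) := by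
          have h2 : Real.exp (2 * μmax * T) = Real.exp (μmax * T) * Real.exp (μmax * T) := by
            rw [← Real.exp_add]; ring_nf
          rw [h2]; ring
  -- S1 ≤ C * S3
  have hS1 : (∑ j, ‖y j - (P (y j) : EuclideanSpace ℝ (Fin N))‖ ^ 2) ≤
      (L : ℝ) * cJ ^ 2 * cJi ^ 2 * Real.exp (2 * μmax * T) * S3 := by
    have step : ∀ j, ‖y j - (P (y j) : EuclideanSpace ℝ (Fin N))‖ ^ 2 ≤
        (∑ k, (K k j) ^ 2) * S3 := by
      intro j
      rw [hr j]
      have h1 : ‖∑ k, K k j • s k‖ ≤ ∑ k, |K k j| * ‖s k‖ := by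
        refine (norm_sum_le _ _).trans_eq ?_
        exact Finset.sum_congr rfl fun k _ => by rw [norm_smul, Real.norm_eq_abs]
      calc ‖∑ k, K k j • s k‖ ^ 2 ≤ (∑ k, |K k j| * ‖s k‖) ^ 2 :=
            pow_le_pow_left₀ (norm_nonneg _) h1 2
        _ ≤ (∑ k, |K k j| ^ 2) * ∑ k, ‖s k‖ ^ 2 :=
            Finset.sum_mul_sq_le_sq_mul_sq _ _ _
        _ = (∑ k, (K k j) ^ 2) * S3 := by
            rw [hS3]; congr 1; exact Finset.sum_congr rfl fun k _ => sq_abs _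
    calc (∑ j, ‖y j - (P (y j) : EuclideanSpace ℝ (Fin N))‖ ^ 2)
        ≤ ∑ j : Fin L, (∑ k, (K k j) ^ 2) * S3 := Finset.sum_le_sum fun j _ => step j
      _ ≤ ∑ j : Fin L, (cJ ^ 2 * cJi ^ 2 * Real.exp (2 * μmax * T)) * S3 :=
          Finset.sum_le_sum fun j _ => mul_le_mul_of_nonneg_right (hKcol j) hS3nonneg
      _ = (L : ℝ) * cJ ^ 2 * cJi ^ 2 * Real.exp (2 * μmax * T) * S3 := by
          rw [Finset.sum_const, Finset.card_univ, Fintype.card_fin, nsmul_eq_mul]; ring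
  -- S2 ≤ S4
  have hΦnorm : ∀ c : Fin L → ℝ, ∑ i, ((Φ *ᵥ c) i) ^ 2 = ∑ k, (c k) ^ 2 := by
    intro c
    have h1 : (Φ *ᵥ c) ⬝ᵥ (Φ *ᵥ c) = c ⬝ᵥ c := by
      rw [Matrix.dotProduct_mulVec, ← Matrix.mulVec_transpose, Matrix.mulVec_mulVec, hΦ,
        Matrix.one_mulVec]
    simpa [dotProduct, sq] using h1
  have hg : ∀ j i, A i j = (Φ *ᵥ (fun k => (Matrix.diagonal f * J) k j)) i := by
    intro j i
    rw [hA, Matrix.mul_assoc, Matrix.mul_apply]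
    rfl
  have hgt : ∀ j i, Atil i j =
      (Φ *ᵥ (fun k => Real.exp (-μ k * T) * (Matrix.diagonal f * J) k j)) i := by
    intro j i
    rw [hAtil, Matrix.mul_assoc, Matrix.mul_assoc, Matrix.mul_apply]
    refine Finset.sum_congr rfl fun k _ => ?_
    congr 1
    rw [hD, Matrix.diagonal_mul]
  have hy4 : ∀ j, ‖y j‖ ^ 2 = ∑ k, ((Matrix.diagonal f * J) k j) ^ 2 := by
    intro j
    rw [euclid_norm_sq]
    rw [show (∑ i, (y j i) ^ 2) = ∑ i, ((Φ *ᵥ (fun k => (Matrix.diagonal f * J) k j)) i) ^ 2 from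
      Finset.sum_congr rfl fun i _ => by rw [hy, hg]]
    exact hΦnorm _
  have hS2 : (∑ j, ‖ytil j‖ ^ 2) ≤ ∑ j, ‖y j‖ ^ 2 := by
    apply Finset.sum_le_sum
    intro j _
    rw [euclid_norm_sq, hy4]
    rw [show (∑ i, (ytil j i) ^ 2) =
        ∑ i, ((Φ *ᵥ (fun k => Real.exp (-μ k * T) * (Matrix.diagonal f * J) k j)) i) ^ 2 from
      Finset.sum_congr rfl fun i _ => by rw [hytil, hgt]]
    rw [hΦnorm]
    apply Finset.sum_le_sum
    intro k _
    rw [mul_pow]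
    have he : Real.exp (-μ k * T) ≤ 1 := by
      rw [Real.exp_le_one_iff]
      nlinarith [hμk k]
    have h2 : Real.exp (-μ k * T) ^ 2 ≤ 1 := by nlinarith [Real.exp_pos (-μ k * T)]
    nlinarith [sq_nonneg ((Matrix.diagonal f * J) k j), h2]
  -- combine
  have hS2nonneg : 0 ≤ ∑ j, ‖ytil j‖ ^ 2 := Finset.sum_nonneg fun j _ => by positivity
  have hCnonneg : 0 ≤ (L : ℝ) * cJ ^ 2 * cJi ^ 2 * Real.exp (2 * μmax * T) * S3 := by positivity
  calc (∑ j, ‖y j - (P (y j) : EuclideanSpace ℝ (Fin N))‖ ^ 2) * (∑ j, ‖ytil j‖ ^ 2)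
      ≤ ((L : ℝ) * cJ ^ 2 * cJi ^ 2 * Real.exp (2 * μmax * T) * S3) * (∑ j, ‖y j‖ ^ 2) :=
        mul_le_mul hS1 hS2 hS2nonneg hCnonneg
    _ = (L : ℝ) * cJ ^ 2 * cJi ^ 2 * Real.exp (2 * μmax * T) * S3 * (∑ j, ‖y j‖ ^ 2) := by ring
end
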